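/- Monotone growth of the total population (first part of Theorem 2): if C, L, T : [t₀, ∞) → ℝ are differentiable, satisfy the system C' = ρ_C(T+L+C)C − C/τ_C − αC², L' = ρ_L L − αLC, T' = −αTC, have C(t₀) > 0, L(t₀) > 0, T(t₀) > 0, and if ρ_C > α and (ρ_C − α)·τ_C·S(t₀) > 1 where S = C + L + T, then S is strictly monotone increasing on [t₀, ∞). -/

import Mathlib

lemma pos_persist (t₀ : ℝ) (f a d : ℝ → ℝ)
    (hf : ∀ t ∈ Set.Ici t₀, HasDerivAt f (d t) t)
    (hd : ∀ t ∈ Set.Ici t₀, 0 ≤ f t → a t * f t ≤ d t)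
    (ha : ContinuousOn a (Set.Ici t₀)) (h0 : 0 < f t₀) :
    ∀ t ∈ Set.Ici t₀, 0 < f t := by
  intro t₁ ht₁
  by_contra hneg
  push_neg at hneg
  have hfc : ContinuousOn f (Set.Ici t₀) := fun x hx =>
    (hf x hx).continuousAt.continuousWithinAt
  set K : Set ℝ := {t | t ∈ Set.Icc t₀ t₁ ∧ f t ≤ 0} with hKdef
  have hKne : K.Nonempty := ⟨t₁, ⟨ht₁, le_refl t₁⟩, hneg⟩
  have hKclosed : IsClosed K := by
    have heq : K = Set.Icc t₀ t₁ ∩ f ⁻¹' Set.Iic 0 := by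
      ext x; simp [hKdef, Set.mem_setOf_eq]
    rw [heq]
    exact (hfc.mono Set.Icc_subset_Ici_self).preimage_isClosed_of_isClosed
      isClosed_Icc isClosed_Iic
  have hKbdd : BddBelow K := ⟨t₀, fun x hx => hx.1.1⟩
  set s := sInf K with hsdef
  have hsK : s ∈ K := hKclosed.csInf_mem hKne hKbdd
  have hst₀ : t₀ < s := by
    rcases lt_or_eq_of_le hsK.1.1 with h | h
    · exact h
    · exact absurd hsK.2 (not_le.mpr (h ▸ h0))
  have hfpos : ∀ t ∈ Set.Ico t₀ s, 0 < f t := by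
    intro t ht
    by_contra hft; push_neg at hft
    have htK : t ∈ K := ⟨⟨ht.1, ht.2.le.trans hsK.1.2⟩, hft⟩
    exact absurd (csInf_le hKbdd htK) (not_le.mpr ht.2)
  obtain ⟨z, hz, hzmin⟩ := (isCompact_Icc : IsCompact (Set.Icc t₀ s)).exists_isMinOn
    (Set.nonempty_Icc.mpr hst₀.le) (ha.mono (Set.Icc_subset_Ici_self.trans
      (Set.Ici_subset_Ici.mpr le_rfl)))
  set m := a z with hmdef
  have hh : ∀ t ∈ Set.Ici t₀, HasDerivAt (fun u => f u * Real.exp (-m * (u - t₀)))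
      ((d t - m * f t) * Real.exp (-m * (t - t₀))) t := by
    intro t ht
    have h1 : HasDerivAt (fun u : ℝ => -m * (u - t₀)) (-m) t := by
      simpa using ((hasDerivAt_id t).sub_const t₀).const_mul (-m)
    have he : HasDerivAt (fun u => Real.exp (-m * (u - t₀)))
        (Real.exp (-m * (t - t₀)) * (-m)) t := h1.exp
    have := (hf t ht).mul he
    exact this.congr_deriv (by ring)
  have hmono : MonotoneOn (fun u => f u * Real.exp (-m * (u - t₀))) (Set.Icc t₀ s) := by
    apply monotoneOn_of_deriv_nonneg (convex_Icc t₀ s)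
    · exact ((hfc.mono Set.Icc_subset_Ici_self).mul
        ((Real.continuous_exp.comp (by continuity)).continuousOn))
    · intro x hx
      rw [interior_Icc] at hx
      exact (hh x (Set.mem_Ici.mpr hx.1.le)).differentiableAt.differentiableWithinAt
    · intro x hx
      rw [interior_Icc] at hx
      have hx' : x ∈ Set.Ici t₀ := Set.mem_Ici.mpr hx.1.le
      rw [(hh x hx').deriv]
      have hfx : 0 ≤ f x := (hfpos x ⟨hx.1.le, hx.2⟩).le
      have h1 : a x * f x ≤ d x := hd x hx' hfx
      have h2 : m ≤ a x := hzmin ⟨hx.1.le, hx.2.le⟩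
      have h3 : m * f x ≤ a x * f x := mul_le_mul_of_nonneg_right h2 hfx
      have : 0 ≤ d x - m * f x := by linarith
      exact mul_nonneg this (Real.exp_pos _).le
  have hle := hmono (Set.left_mem_Icc.mpr hst₀.le) (Set.right_mem_Icc.mpr hst₀.le) hst₀.le
  simp only [sub_self, mul_zero, neg_mul, neg_zero, Real.exp_zero, mul_one] at hle
  nlinarith [Real.exp_pos (-(m * (s - t₀))), hsK.2, h0]


/-- Under the instability hypotheses `ρ_C > α` and
`(ρ_C − α)·τ_C·S(t₀) > 1`, the total population `S = C + L + T` is strictly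
monotone increasing on `[t₀, ∞)`. -/
theorem carT_total_population_strictMono
    (ρC ρL α τC : ℝ) (hρC : 0 < ρC) (hρL : 0 < ρL) (hα : 0 < α) (hτC : 0 < τC)
    (t₀ : ℝ) (C L T S : ℝ → ℝ)
    (hS : S = fun t => C t + L t + T t)
    (hC : ∀ t ∈ Set.Ici t₀,
      HasDerivAt C (ρC * (T t + L t + C t) * C t - C t / τC - α * (C t) ^ 2) t)
    (hL : ∀ t ∈ Set.Ici t₀, HasDerivAt L (ρL * L t - α * L t * C t) t)
    (hT : ∀ t ∈ Set.Ici t₀, HasDerivAt T (-(α * T t * C t)) t)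
    (hC0 : 0 < C t₀) (hL0 : 0 < L t₀) (hT0 : 0 < T t₀)
    (hunstable1 : ρC > α)
    (hunstable2 : (ρC - α) * τC * S t₀ > 1) :
    StrictMonoOn S (Set.Ici t₀) := by
  have hCc : ContinuousOn C (Set.Ici t₀) := fun x hx => (hC x hx).continuousAt.continuousWithinAt
  have hLc : ContinuousOn L (Set.Ici t₀) := fun x hx => (hL x hx).continuousAt.continuousWithinAt
  have hTc : ContinuousOn T (Set.Ici t₀) := fun x hx => (hT x hx).continuousAt.continuousWithinAt
  have hSc : ContinuousOn S (Set.Ici t₀) := by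
    rw [hS]; exact (hCc.add hLc).add hTc
  -- positivity of C
  have hCpos : ∀ t ∈ Set.Ici t₀, 0 < C t := by
    refine pos_persist t₀ C (fun t => ρC * (T t + L t + C t) - 1/τC - α * C t)
      (fun t => ρC * (T t + L t + C t) * C t - C t / τC - α * (C t) ^ 2)
      hC (fun t _ _ => le_of_eq (by ring)) ?_ hC0
    exact ((continuousOn_const.mul ((hTc.add hLc).add hCc)).sub continuousOn_const).sub
      (continuousOn_const.mul hCc)
  -- positivity of L
  have hLpos : ∀ t ∈ Set.Ici t₀, 0 < L t := by
    refine pos_persist t₀ L (fun t => ρL - α * C t)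
      (fun t => ρL * L t - α * L t * C t)
      hL (fun t _ _ => le_of_eq (by ring)) ?_ hL0
    exact continuousOn_const.sub (continuousOn_const.mul hCc)
  -- derivative of S
  have hS' : ∀ t ∈ Set.Ici t₀,
      HasDerivAt S (C t * ((ρC - α) * S t - 1/τC) + ρL * L t) t := by
    intro t ht
    have h := ((hC t ht).add (hL t ht)).add (hT t ht)
    rw [hS]
    exact h.congr_deriv (by ring)
  -- positivity of g = (ρC - α) * S - 1/τC
  have hg0 : 0 < (ρC - α) * S t₀ - 1/τC := by
    have h1 : 1/τC < (ρC - α) * S t₀ := by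
      rw [div_lt_iff₀ hτC]; nlinarith
    linarith
  have hgpos : ∀ t ∈ Set.Ici t₀, 0 < (ρC - α) * S t - 1/τC := by
    refine pos_persist t₀ (fun t => (ρC - α) * S t - 1/τC)
      (fun t => (ρC - α) * C t)
      (fun t => (ρC - α) * (C t * ((ρC - α) * S t - 1/τC) + ρL * L t))
      (fun t ht => by simpa using ((hS' t ht).const_mul (ρC - α)).sub_const (1/τC))
      (fun t ht hgt => ?_) (continuousOn_const.mul hCc) hg0
    have hLt := hLpos t ht
    nlinarith [mul_pos (sub_pos.mpr hunstable1) (mul_pos hρL hLt)]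
  -- conclude
  apply strictMonoOn_of_deriv_pos (convex_Ici t₀) hSc
  intro x hx
  rw [interior_Ici, Set.mem_Ioi] at hx
  rw [(hS' x hx.le).deriv]
  exact add_pos (mul_pos (hCpos x hx.le) (hgpos x hx.le)) (mul_pos hρL (hLpos x hx.le))
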